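/- Let 3/2 < q < ∞. There exists a constant C = C(q) > 0 such that for every measurable f : ℝ³ → ℝ with f ≥ 0 almost everywhere, f ∈ L¹(ℝ³) ∩ L^q(ℝ³), the integrals defining ā^f_{ij}(v) converge absolutely for every v ∈ ℝ³, and for every v ∈ ℝ³ and every ξ ∈ ℝ³ one has Σ_{i,j=1}^{3} ā^f_{ij}(v) ξ_i ξ_j ≤ C (‖f‖_{L^q(ℝ³)} + ‖f‖_{L¹(ℝ³)}) |ξ|². -/

import Mathlib

open MeasureTheory
open scoped ENNReal NNReal

/-- The Coulomb kernel matrix `a_{ij}(z) = (1/|z|)(δ_{ij} − z_i z_j/|z|²)`. -/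
noncomputable def aK (i j : Fin 3) (z : EuclideanSpace ℝ (Fin 3)) : ℝ :=
  (1 / ‖z‖) * ((if i = j then (1 : ℝ) else 0) - z i * z j / ‖z‖ ^ 2)

namespace UpperEllipticityAux

open Metric Set

local notation "E3" => EuclideanSpace ℝ (Fin 3)

lemma abs_apply_le_norm (z : E3) (i : Fin 3) : |z i| ≤ ‖z‖ := by
  rw [EuclideanSpace.norm_eq]
  calc |z i| = Real.sqrt (‖z i‖ ^ 2) := by
        rw [Real.sqrt_sq (norm_nonneg _), Real.norm_eq_abs]
    _ ≤ Real.sqrt (∑ j, ‖z j‖ ^ 2) :=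
        Real.sqrt_le_sqrt (Finset.single_le_sum (f := fun j => ‖z j‖ ^ 2)
          (fun j _ => by positivity) (Finset.mem_univ i))

lemma abs_aK_le (i j : Fin 3) (z : E3) : |aK i j z| ≤ 2 * ‖z‖⁻¹ := by
  rcases eq_or_ne z 0 with rfl | hz
  · simp [aK]
  · have hz0 : 0 < ‖z‖ := norm_pos_iff.2 hz
    have h1 : |z i * z j / ‖z‖ ^ 2| ≤ 1 := by
      rw [abs_div, abs_mul, div_le_one (by positivity)]
      calc |z i| * |z j| ≤ ‖z‖ * ‖z‖ :=
            mul_le_mul (abs_apply_le_norm z i) (abs_apply_le_norm z j) (abs_nonneg _)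
              (norm_nonneg _)
        _ = |‖z‖ ^ 2| := by rw [abs_of_nonneg (by positivity)]; ring
    have h2 : |(if i = j then (1 : ℝ) else 0) - z i * z j / ‖z‖ ^ 2| ≤ 2 := by
      calc |(if i = j then (1 : ℝ) else 0) - z i * z j / ‖z‖ ^ 2|
          ≤ |if i = j then (1 : ℝ) else 0| + |z i * z j / ‖z‖ ^ 2| := abs_sub _ _
        _ ≤ 1 + 1 := by
            refine add_le_add ?_ h1
            split <;> simp
        _ = 2 := by norm_num
    rw [aK, abs_mul, abs_of_nonneg (by positivity : (0:ℝ) ≤ 1 / ‖z‖), one_div]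
    calc ‖z‖⁻¹ * |(if i = j then (1 : ℝ) else 0) - z i * z j / ‖z‖ ^ 2|
        ≤ ‖z‖⁻¹ * 2 := mul_le_mul_of_nonneg_left h2 (by positivity)
      _ = 2 * ‖z‖⁻¹ := mul_comm _ _

lemma measurable_aK (i j : Fin 3) : Measurable (aK i j) := by
  have hn : Measurable fun z : E3 => ‖z‖ := measurable_norm
  have hi : Measurable fun z : E3 => z i := (by fun_prop : Continuous fun z : E3 => z i).measurable
  have hj : Measurable fun z : E3 => z j := (by fun_prop : Continuous fun z : E3 => z j).measurable
  exact (measurable_const.div hn).mul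
    (measurable_const.sub ((hi.mul hj).div (hn.pow_const 2)))

lemma lintegral_ball_lt_top {p : ℝ} (hp0 : 0 < p) (hp3 : p < 3) :
    ∫⁻ z in ball (0 : E3) 1, ENNReal.ofReal (‖z‖⁻¹) ^ p ∂volume < ⊤ := by
  classical
  set B := volume (ball (0 : E3) 1) with hB
  have hBlt : B < ⊤ := measure_ball_lt_top
  set x : ℝ≥0∞ := ENNReal.ofReal ((2 : ℝ) ^ (p - 3)) with hx
  have hx1 : x < 1 := by
    rw [hx]
    exact ENNReal.ofReal_lt_one.2 (Real.rpow_lt_one_of_one_lt_of_neg one_lt_two (by linarith))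
  set g : E3 → ℝ≥0∞ := fun z => ENNReal.ofReal (‖z‖⁻¹) ^ p with hgdef
  set S : ℕ → Set E3 := fun n => ball (0 : E3) ((1/2 : ℝ) ^ n) \ ball (0 : E3) ((1/2 : ℝ) ^ (n+1))
    with hS
  have hsub : ball (0 : E3) 1 ⊆ {(0 : E3)} ∪ ⋃ n, S n := by
    intro z hz
    rcases eq_or_ne z 0 with rfl | hz0
    · exact Or.inl rfl
    right
    have hz1 : ‖z‖ < 1 := by simpa [mem_ball_zero_iff] using hz
    have hzpos : 0 < ‖z‖ := norm_pos_iff.2 hz0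
    have hex : ∃ m, (1/2 : ℝ) ^ m ≤ ‖z‖ := by
      obtain ⟨m, hm⟩ := exists_pow_lt_of_lt_one hzpos (by norm_num : (1/2 : ℝ) < 1)
      exact ⟨m, hm.le⟩
    have hm : (1/2 : ℝ) ^ (Nat.find hex) ≤ ‖z‖ := Nat.find_spec hex
    have hmne : Nat.find hex ≠ 0 := by
      intro h
      rw [h] at hm
      simp at hm
      linarith
    obtain ⟨n, hn⟩ := Nat.exists_eq_succ_of_ne_zero hmne
    have hnlt : ¬ ((1/2 : ℝ) ^ n ≤ ‖z‖) := Nat.find_min hex (by omega)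
    refine mem_iUnion.2 ⟨n, ⟨?_, ?_⟩⟩
    · simpa [mem_ball_zero_iff] using not_le.1 hnlt
    · simp only [mem_ball_zero_iff, not_lt]
      rw [hn] at hm
      exact_mod_cast hm
  have hterm : ∀ n, ∫⁻ z in S n, g z ∂volume ≤ (ENNReal.ofReal ((2 : ℝ) ^ p) * B) * x ^ n := by
    intro n
    have hρ : (0 : ℝ) < (1/2 : ℝ) ^ (n+1) := by positivity
    have hb : ∀ z ∈ S n, g z ≤ ENNReal.ofReal (((1/2 : ℝ) ^ (n+1))⁻¹) ^ p := by
      intro z hz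
      have h1 : (1/2 : ℝ) ^ (n+1) ≤ ‖z‖ := by
        have h2 := hz.2
        simpa [mem_ball_zero_iff, not_lt] using h2
      have h3 : ‖z‖⁻¹ ≤ ((1/2 : ℝ) ^ (n+1))⁻¹ := by
        exact inv_anti₀ hρ h1
      exact ENNReal.rpow_le_rpow (ENNReal.ofReal_le_ofReal h3) hp0.le
    have e1 : (((1/2 : ℝ)) ^ (n+1))⁻¹ ^ p = (2 : ℝ) ^ (((n : ℝ) + 1) * p) := by
      rw [one_div, inv_pow, inv_inv, ← Real.rpow_natCast (2 : ℝ) (n+1),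
        ← Real.rpow_mul (by norm_num : (0:ℝ) ≤ 2)]
      push_cast
      ring_nf
    have e2 : ((1/2 : ℝ) ^ n) ^ 3 = (2 : ℝ) ^ (-((n : ℝ) * 3)) := by
      rw [one_div, ← pow_mul, inv_pow, ← Real.rpow_natCast (2 : ℝ) (n * 3),
        ← Real.rpow_neg (by norm_num : (0:ℝ) ≤ 2)]
      push_cast
      ring_nf
    have key : (((1/2 : ℝ)) ^ (n+1))⁻¹ ^ p * ((1/2 : ℝ) ^ n) ^ 3
        = (2 : ℝ) ^ p * ((2 : ℝ) ^ (p - 3)) ^ n := by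
      rw [e1, e2, ← Real.rpow_natCast ((2 : ℝ) ^ (p - 3)) n,
        ← Real.rpow_mul (by norm_num : (0:ℝ) ≤ 2),
        ← Real.rpow_add (by norm_num : (0:ℝ) < 2),
        ← Real.rpow_add (by norm_num : (0:ℝ) < 2)]
      congr 1
      ring
    calc ∫⁻ z in S n, g z ∂volume
        ≤ ∫⁻ _ in S n, ENNReal.ofReal (((1/2 : ℝ) ^ (n+1))⁻¹) ^ p ∂volume :=
          setLIntegral_mono measurable_const hb
      _ = ENNReal.ofReal (((1/2 : ℝ) ^ (n+1))⁻¹) ^ p * volume (S n) := setLIntegral_const _ _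
      _ ≤ ENNReal.ofReal (((1/2 : ℝ) ^ (n+1))⁻¹) ^ p * volume (ball (0 : E3) ((1/2 : ℝ) ^ n)) := by
          gcongr
          exact diff_subset
      _ = (ENNReal.ofReal ((2 : ℝ) ^ p) * B) * x ^ n := by
          rw [Measure.addHaar_ball volume _ (by positivity : (0:ℝ) ≤ (1/2 : ℝ) ^ n)]
          have hfr : Module.finrank ℝ E3 = 3 := by
            simp [finrank_euclideanSpace]
          rw [hfr, ← hB]
          rw [ENNReal.ofReal_rpow_of_nonneg (by positivity) hp0.le]
          rw [← mul_assoc, ← ENNReal.ofReal_mul (by positivity), key,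
            ENNReal.ofReal_mul (by positivity), hx,
            ← ENNReal.ofReal_pow (by positivity)]
          ring
  calc ∫⁻ z in ball (0 : E3) 1, g z ∂volume
      ≤ ∫⁻ z in {(0 : E3)} ∪ ⋃ n, S n, g z ∂volume := lintegral_mono_set hsub
    _ ≤ ∫⁻ z in {(0 : E3)}, g z ∂volume + ∫⁻ z in ⋃ n, S n, g z ∂volume :=
        lintegral_union_le _ _ _
    _ ≤ 0 + ∑' n, ∫⁻ z in S n, g z ∂volume := by
        gcongr
        · exact le_of_eq (setLIntegral_measure_zero _ _ (measure_singleton 0))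
        · exact lintegral_iUnion_le _ _
    _ ≤ 0 + ∑' n, (ENNReal.ofReal ((2 : ℝ) ^ p) * B) * x ^ n :=
        add_le_add le_rfl (Summable.tsum_le_tsum hterm ENNReal.summable ENNReal.summable)
    _ = (ENNReal.ofReal ((2 : ℝ) ^ p) * B) * (1 - x)⁻¹ := by
        rw [zero_add, ENNReal.tsum_mul_left, ENNReal.tsum_geometric]
    _ < ⊤ := by
        refine ENNReal.mul_lt_top (ENNReal.mul_lt_top ENNReal.ofReal_lt_top hBlt) ?_
        exact ENNReal.inv_lt_top.2 (tsub_pos_of_lt hx1)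

/-- The near-part kernel. -/
noncomputable def ψK : E3 → ℝ := (ball (0 : E3) 1).indicator (fun z => ‖z‖⁻¹)

lemma measurable_ψK : Measurable ψK :=
  (measurable_norm.inv).indicator measurableSet_ball

lemma eLpNorm_ψK_lt_top {p : ℝ} (hp0 : 0 < p) (hp3 : p < 3) :
    eLpNorm ψK (ENNReal.ofReal p) volume < ⊤ := by
  have hp0' : ENNReal.ofReal p ≠ 0 := by
    simp only [ne_eq, ENNReal.ofReal_eq_zero, not_le]
    exact hp0
  have hptop : ENNReal.ofReal p ≠ ⊤ := ENNReal.ofReal_ne_top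
  rw [eLpNorm_eq_lintegral_rpow_enorm_toReal hp0' hptop, ENNReal.toReal_ofReal hp0.le]
  have heq : ∀ z : E3, ‖ψK z‖ₑ ^ p
      = (ball (0 : E3) 1).indicator (fun z => ENNReal.ofReal (‖z‖⁻¹) ^ p) z := by
    intro z
    by_cases hz : z ∈ ball (0 : E3) 1
    · rw [Set.indicator_of_mem hz, ψK, Set.indicator_of_mem hz,
        Real.enorm_eq_ofReal (by positivity)]
    · rw [Set.indicator_of_notMem hz, ψK, Set.indicator_of_notMem hz]
      simp [ENNReal.zero_rpow_of_pos hp0]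
  simp_rw [heq]
  rw [lintegral_indicator measurableSet_ball]
  exact ENNReal.rpow_lt_top_of_nonneg (by positivity) (lintegral_ball_lt_top hp0 hp3).ne

end UpperEllipticityAux

open UpperEllipticityAux Metric Set

theorem upper_ellipticity (q : ℝ) (hq : 3 / 2 < q) :
    ∃ C > (0 : ℝ), ∀ f : EuclideanSpace ℝ (Fin 3) → ℝ,
      Measurable f → (∀ᵐ z : EuclideanSpace ℝ (Fin 3) ∂volume, 0 ≤ f z) →
      Integrable f → MemLp f (ENNReal.ofReal q) volume →
      (∀ (v : EuclideanSpace ℝ (Fin 3)) (i j : Fin 3),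
        Integrable (fun z => aK i j (v - z) * f z)) ∧
      ∀ v ξ : EuclideanSpace ℝ (Fin 3),
        (∑ i, ∑ j, (∫ z, aK i j (v - z) * f z) * ξ i * ξ j)
          ≤ C * ((eLpNorm f (ENNReal.ofReal q) volume).toReal
              + (eLpNorm f 1 volume).toReal) * ‖ξ‖ ^ 2 := by
  classical
  have hq1 : (1 : ℝ) < q := by linarith
  have hqpos : (0 : ℝ) < q := by linarith
  set p : ℝ := q / (q - 1) with hpdef
  have hq1' : (0 : ℝ) < q - 1 := by linarith
  have hp0 : 0 < p := by positivity
  have hp3 : p < 3 := by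
    rw [hpdef, div_lt_iff₀ hq1']
    linarith
  have hconj : 1 / p + 1 / q = 1 := by
    rw [hpdef]
    field_simp
    ring
  have hψlt : eLpNorm ψK (ENNReal.ofReal p) volume < ⊤ := eLpNorm_ψK_lt_top hp0 hp3
  set K : ℝ := (eLpNorm ψK (ENNReal.ofReal p) volume).toReal with hK
  have hK0 : 0 ≤ K := ENNReal.toReal_nonneg
  refine ⟨18 * (K + 1), by positivity, ?_⟩
  intro f hfm hf0 hf1 hfq
  set nq : ℝ := (eLpNorm f (ENNReal.ofReal q) volume).toReal with hnq
  set n1 : ℝ := (eLpNorm f 1 volume).toReal with hn1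
  have hnq0 : 0 ≤ nq := ENNReal.toReal_nonneg
  have hn10 : 0 ≤ n1 := ENNReal.toReal_nonneg
  have hPQ : (1 : ℝ≥0∞) / 1 = 1 / ENNReal.ofReal p + 1 / ENNReal.ofReal q := by
    simp only [one_div]
    rw [← ENNReal.ofReal_inv_of_pos hp0, ← ENNReal.ofReal_inv_of_pos hqpos,
      ← ENNReal.ofReal_add (by positivity) (by positivity), inv_one]
    rw [show p⁻¹ + q⁻¹ = 1 by rw [inv_eq_one_div, inv_eq_one_div]; linarith [hconj]]
    exact ENNReal.ofReal_one.symm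
  haveI : ENNReal.HolderTriple (ENNReal.ofReal p) (ENNReal.ofReal q) 1 := ⟨by simpa [one_div] using hPQ.symm⟩
  -- the far-part kernel
  set χK : EuclideanSpace ℝ (Fin 3) → ℝ :=
    ((ball (0 : EuclideanSpace ℝ (Fin 3)) 1)ᶜ).indicator (fun z => ‖z‖⁻¹) with hχK
  have mχK : Measurable χK := (measurable_norm.inv).indicator measurableSet_ball.compl
  have hχ0 : ∀ w, 0 ≤ χK w := by
    intro w
    rw [hχK]
    by_cases hw : w ∈ (ball (0 : EuclideanSpace ℝ (Fin 3)) 1)ᶜ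
    · rw [Set.indicator_of_mem hw]; positivity
    · rw [Set.indicator_of_notMem hw]
  have hχ1 : ∀ w, χK w ≤ 1 := by
    intro w
    rw [hχK]
    by_cases hw : w ∈ (ball (0 : EuclideanSpace ℝ (Fin 3)) 1)ᶜ
    · rw [Set.indicator_of_mem hw]
      have : (1 : ℝ) ≤ ‖w‖ := by simpa [mem_ball_zero_iff, not_lt] using hw
      exact inv_le_one_of_one_le₀ this
    · rw [Set.indicator_of_notMem hw]; norm_num
  have key1 : ∀ g : EuclideanSpace ℝ (Fin 3) → ℝ, AEStronglyMeasurable g volume →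
      ∫ z, g z ≤ (eLpNorm g 1 volume).toReal := by
    intro g hg
    calc ∫ z, g z ≤ |∫ z, g z| := le_abs_self _
      _ = ‖∫ z, g z‖ := (Real.norm_eq_abs _).symm
      _ ≤ ∫ z, ‖g z‖ := norm_integral_le_integral_norm g
      _ = (∫⁻ z, ‖g z‖ₑ ∂volume).toReal := integral_norm_eq_lintegral_enorm hg
      _ = (eLpNorm g 1 volume).toReal := by rw [eLpNorm_one_eq_lintegral_enorm]
  have main : ∀ v : EuclideanSpace ℝ (Fin 3),
      Integrable (fun z => ‖v - z‖⁻¹ * f z) ∧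
      ∫ z, ‖v - z‖⁻¹ * f z ≤ (K + 1) * (nq + n1) := by
    intro v
    have hmp : MeasurePreserving (fun z : EuclideanSpace ℝ (Fin 3) => v - z) volume volume :=
      Measure.measurePreserving_sub_left volume v
    have hsm : Measurable (fun z : EuclideanSpace ℝ (Fin 3) => v - z) :=
      measurable_const.sub measurable_id
    have hψveq : eLpNorm (fun z => ψK (v - z)) (ENNReal.ofReal p) volume
        = eLpNorm ψK (ENNReal.ofReal p) volume :=
      eLpNorm_comp_measurePreserving measurable_ψK.aestronglyMeasurable hmp
    have hψv : MemLp (fun z => ψK (v - z)) (ENNReal.ofReal p) volume := by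
      refine ⟨(measurable_ψK.comp hsm).aestronglyMeasurable, ?_⟩
      rw [hψveq]
      exact hψlt
    have hg1 : Integrable (fun z => ψK (v - z) * f z) := by
      have h := MemLp.smul (f := f) (φ := fun z => ψK (v - z)) (r := 1) hfq hψv
      rw [memLp_one_iff_integrable] at h
      exact h
    have hg2 : Integrable (fun z => χK (v - z) * f z) := by
      refine Integrable.mono' hf1.abs ((mχK.comp hsm).mul hfm).aestronglyMeasurable ?_
      filter_upwards with z
      rw [Real.norm_eq_abs, abs_mul]
      calc |χK (v - z)| * |f z| ≤ 1 * |f z| := by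
            refine mul_le_mul_of_nonneg_right ?_ (abs_nonneg _)
            rw [abs_of_nonneg (hχ0 _)]
            exact hχ1 _
        _ = |f z| := one_mul _
    have hdecomp : ∀ z, ‖v - z‖⁻¹ = ψK (v - z) + χK (v - z) := by
      intro z
      have h := congrFun (Set.indicator_self_add_compl
        (ball (0 : EuclideanSpace ℝ (Fin 3)) 1) (fun w : EuclideanSpace ℝ (Fin 3) => ‖w‖⁻¹)) (v - z)
      simpa [ψK, hχK] using h.symm
    constructor
    · have : (fun z => ‖v - z‖⁻¹ * f z)
          = fun z => ψK (v - z) * f z + χK (v - z) * f z := by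
        funext z
        rw [hdecomp z, add_mul]
      rw [this]
      exact hg1.add hg2
    · have hHolder : eLpNorm (fun z => ψK (v - z) * f z) 1 volume
          ≤ eLpNorm ψK (ENNReal.ofReal p) volume * eLpNorm f (ENNReal.ofReal q) volume := by
        have h := eLpNorm_smul_le_mul_eLpNorm (f := f) (φ := fun z => ψK (v - z))
          (p := ENNReal.ofReal p) (q := ENNReal.ofReal q) (r := 1) hfq.1 hψv.1
        rw [hψveq] at h
        exact h
      have hI1 : ∫ z, ψK (v - z) * f z ≤ K * nq := by
        refine (key1 _ ((measurable_ψK.comp hsm).mul hfm).aestronglyMeasurable).trans ?_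
        have hfin : eLpNorm ψK (ENNReal.ofReal p) volume * eLpNorm f (ENNReal.ofReal q) volume
            ≠ ⊤ := ENNReal.mul_ne_top hψlt.ne hfq.eLpNorm_ne_top
        calc (eLpNorm (fun z => ψK (v - z) * f z) 1 volume).toReal
            ≤ (eLpNorm ψK (ENNReal.ofReal p) volume
                * eLpNorm f (ENNReal.ofReal q) volume).toReal :=
              ENNReal.toReal_mono hfin hHolder
          _ = K * nq := ENNReal.toReal_mul
      have hI2 : ∫ z, χK (v - z) * f z ≤ n1 := by
        have hmono : ∫ z, χK (v - z) * f z ≤ ∫ z, |f z| := by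
          refine integral_mono_ae hg2 hf1.abs ?_
          filter_upwards [hf0] with z hz
          calc χK (v - z) * f z ≤ 1 * f z := mul_le_mul_of_nonneg_right (hχ1 _) hz
            _ = f z := one_mul _
            _ ≤ |f z| := le_abs_self _
        refine hmono.trans ?_
        have : ∫ z, |f z| = (eLpNorm f 1 volume).toReal := by
          calc ∫ z, |f z| = ∫ z, ‖f z‖ := by simp [Real.norm_eq_abs]
            _ = (∫⁻ z, ‖f z‖ₑ ∂volume).toReal :=
              integral_norm_eq_lintegral_enorm hfm.aestronglyMeasurable
            _ = (eLpNorm f 1 volume).toReal := by rw [eLpNorm_one_eq_lintegral_enorm]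
        rw [this]
      have hsplit : ∫ z, ‖v - z‖⁻¹ * f z
          = (∫ z, ψK (v - z) * f z) + ∫ z, χK (v - z) * f z := by
        have : (fun z => ‖v - z‖⁻¹ * f z)
            = fun z => ψK (v - z) * f z + χK (v - z) * f z := by
          funext z
          rw [hdecomp z, add_mul]
        rw [this]
        exact integral_add hg1 hg2
      rw [hsplit]
      nlinarith [hI1, hI2, hK0, hnq0, hn10]
  have hint : ∀ (v : EuclideanSpace ℝ (Fin 3)) (i j : Fin 3),
      Integrable (fun z => aK i j (v - z) * f z) := by
    intro v i j
    have hk := (main v).1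
    refine Integrable.mono' (hk.const_mul 2)
      (((measurable_aK i j).comp (measurable_const.sub measurable_id)).mul
        hfm).aestronglyMeasurable ?_
    filter_upwards [hf0] with z hz
    rw [Real.norm_eq_abs, abs_mul]
    calc |aK i j (v - z)| * |f z| ≤ (2 * ‖v - z‖⁻¹) * |f z| :=
          mul_le_mul_of_nonneg_right (abs_aK_le i j (v - z)) (abs_nonneg _)
      _ = 2 * (‖v - z‖⁻¹ * f z) := by rw [abs_of_nonneg hz]; ring
  refine ⟨hint, ?_⟩
  intro v ξ
  set I : ℝ := ∫ z, ‖v - z‖⁻¹ * f z with hIdef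
  have hI0 : 0 ≤ I := by
    rw [hIdef]
    refine integral_nonneg_of_ae ?_
    filter_upwards [hf0] with z hz
    positivity
  have habs : ∀ i j : Fin 3, |∫ z, aK i j (v - z) * f z| ≤ 2 * I := by
    intro i j
    calc |∫ z, aK i j (v - z) * f z| = ‖∫ z, aK i j (v - z) * f z‖ := (Real.norm_eq_abs _).symm
      _ ≤ ∫ z, ‖aK i j (v - z) * f z‖ := norm_integral_le_integral_norm _
      _ ≤ ∫ z, 2 * (‖v - z‖⁻¹ * f z) := by
          refine integral_mono_ae (hint v i j).norm ((main v).1.const_mul 2) ?_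
          filter_upwards [hf0] with z hz
          rw [Real.norm_eq_abs, abs_mul]
          calc |aK i j (v - z)| * |f z| ≤ (2 * ‖v - z‖⁻¹) * |f z| :=
                mul_le_mul_of_nonneg_right (abs_aK_le i j (v - z)) (abs_nonneg _)
            _ = 2 * (‖v - z‖⁻¹ * f z) := by rw [abs_of_nonneg hz]; ring
      _ = 2 * I := by rw [integral_const_mul, hIdef]
  have hterm : ∀ i j : Fin 3,
      (∫ z, aK i j (v - z) * f z) * ξ i * ξ j ≤ 2 * I * ‖ξ‖ * ‖ξ‖ := by
    intro i j
    calc (∫ z, aK i j (v - z) * f z) * ξ i * ξ j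
        ≤ |(∫ z, aK i j (v - z) * f z) * ξ i * ξ j| := le_abs_self _
      _ = |∫ z, aK i j (v - z) * f z| * |ξ i| * |ξ j| := by rw [abs_mul, abs_mul]
      _ ≤ 2 * I * ‖ξ‖ * ‖ξ‖ := by
          refine mul_le_mul (mul_le_mul (habs i j) (abs_apply_le_norm ξ i) (abs_nonneg _)
            (by positivity)) (abs_apply_le_norm ξ j) (abs_nonneg _) ?_
          positivity
  have hsum : (∑ i, ∑ j, (∫ z, aK i j (v - z) * f z) * ξ i * ξ j)
      ≤ 9 * (2 * I * ‖ξ‖ * ‖ξ‖) := by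
    calc (∑ i, ∑ j, (∫ z, aK i j (v - z) * f z) * ξ i * ξ j)
        ≤ ∑ _i : Fin 3, ∑ _j : Fin 3, 2 * I * ‖ξ‖ * ‖ξ‖ :=
          Finset.sum_le_sum fun i _ => Finset.sum_le_sum fun j _ => hterm i j
      _ = 9 * (2 * I * ‖ξ‖ * ‖ξ‖) := by
          simp [Finset.sum_const, Finset.card_univ]
          ring
  refine hsum.trans ?_
  have h2 := (main v).2
  have hxx : ‖ξ‖ ^ 2 = ‖ξ‖ * ‖ξ‖ := sq ‖ξ‖
  rw [hxx]
  nlinarith [mul_nonneg (sub_nonneg.2 h2) (mul_nonneg (norm_nonneg ξ) (norm_nonneg ξ)),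
    norm_nonneg ξ, hI0, hK0, hnq0, hn10]
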